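/- Bounds for the local factors of the singular series: Let k ≥ 1 be an integer and a, q positive integers with (a, q) = 1. For a positive integer r define A(r) = (φ(q)/φ(qr))³ · Σ_{1 ≤ b ≤ r, (b,r)=1} (Σ_{s mod r, (sq+a, r)=1} e(sb/r))² · (Σ_{s mod r, (sq+1, r)=1} e(s^k b/r)). Then: (i) A(p^t) = 0 whenever p is a prime dividing q, and also whenever p is a prime with p ∤ q and t ≥ 2; and (ii) for every ε > 0 and every prime p ∤ q, |A(p)| ≪_{k,ε} p^{−3/2+ε}. -/

import Mathlib

open scoped Classical

/-- `e(θ) = exp(2πiθ)`. -/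
noncomputable def e (θ : ℝ) : ℂ := Complex.exp (2 * (Real.pi : ℂ) * Complex.I * (θ : ℂ))

/-- The local factor
`A(r) = (φ(q)/φ(qr))³ Σ_{(b,r)=1} (Σ_{s(r),(sq+a,r)=1} e(sb/r))² (Σ_{s(r),(sq+1,r)=1} e(s^k b/r))`. -/
noncomputable def Aloc (k a q r : ℕ) : ℂ :=
  (((Nat.totient q : ℝ) / (Nat.totient (q * r) : ℝ)) ^ 3 : ℝ) *
    ∑ b ∈ (Finset.Icc 1 r).filter (fun b => Nat.Coprime b r),
      (∑ s ∈ (Finset.range r).filter (fun s => Nat.Coprime (s * q + a) r),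
          e (((s * b : ℕ) : ℝ) / (r : ℝ))) ^ 2 *
        (∑ s ∈ (Finset.range r).filter (fun s => Nat.Coprime (s * q + 1) r),
          e (((s ^ k * b : ℕ) : ℝ) / (r : ℝ)))

/-! ### Basic lemmas about `e` -/

lemma e_mul_nat (m : ℕ) (θ : ℝ) : e ((m : ℝ) * θ) = e θ ^ m := by
  rw [e, e, ← Complex.exp_nat_mul]; push_cast; ring_nf

lemma norm_e (θ : ℝ) : ‖e θ‖ = 1 := by
  rw [e, Complex.norm_exp]
  have : (2 * (Real.pi : ℂ) * Complex.I * (θ : ℂ)).re = 0 := by simp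
  rw [this, Real.exp_zero]

lemma e_nat_div (n r : ℕ) : e ((n:ℝ)/(r:ℝ)) = e (1/(r:ℝ)) ^ n := by
  rw [← e_mul_nat]; ring_nf

lemma e_one : e 1 = 1 := by
  rw [e]; push_cast; rw [mul_one]
  simpa [mul_comm] using Complex.exp_two_pi_mul_I

lemma e_r_pow (r : ℕ) (hr : 0 < r) : e (1/(r:ℝ)) ^ r = 1 := by
  rw [← e_nat_div]; rw [div_self (by positivity), e_one]

lemma e_ne_zero (θ : ℝ) : e θ ≠ 0 := Complex.exp_ne_zero _

lemma e_pow_int_eq_one_iff (r : ℕ) (hr : 0 < r) (n : ℤ) :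
    e (1/(r:ℝ)) ^ n = 1 ↔ (r:ℤ) ∣ n := by
  have hz : e (1/(r:ℝ)) ^ n = Complex.exp (2 * (Real.pi : ℂ) * Complex.I * ((n : ℂ)/(r:ℂ))) := by
    rw [e, ← Complex.exp_int_mul]; push_cast; ring_nf
  have hπ : (Real.pi : ℂ) ≠ 0 := by exact_mod_cast Real.pi_ne_zero
  have hI : Complex.I ≠ 0 := Complex.I_ne_zero
  have h2 : (2 * (Real.pi : ℂ) * Complex.I) ≠ 0 := by
    simp [hπ, hI]
  have hr' : (r : ℂ) ≠ 0 := by exact_mod_cast hr.ne'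
  rw [hz, Complex.exp_eq_one_iff]
  constructor
  · rintro ⟨m, hm⟩
    have hm' : 2 * (Real.pi : ℂ) * Complex.I * ((n : ℂ)/(r:ℂ)) =
        2 * (Real.pi : ℂ) * Complex.I * (m : ℂ) := by rw [hm]; ring
    have h3 : ((n : ℂ)/(r:ℂ)) = (m : ℂ) := mul_left_cancel₀ h2 hm'
    have : (n : ℂ) = (r : ℂ) * m := by
      field_simp at h3; linear_combination h3
    exact ⟨m, by exact_mod_cast this⟩
  · rintro ⟨m, rfl⟩
    refine ⟨m, ?_⟩
    push_cast; field_simp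

lemma e_pow_nat_eq_one_iff (r : ℕ) (hr : 0 < r) (n : ℕ) :
    e (1/(r:ℝ)) ^ n = 1 ↔ r ∣ n := by
  have := e_pow_int_eq_one_iff r hr (n : ℤ)
  rw [zpow_natCast] at this
  rw [this, Int.natCast_dvd_natCast]

lemma geom_zero {z : ℂ} {r : ℕ} (hz : z ^ r = 1) (h1 : z ≠ 1) :
    ∑ s ∈ Finset.range r, z ^ s = 0 := by
  rw [geom_sum_eq h1, hz, sub_self, zero_div]

lemma conj_unit {z : ℂ} (h : ‖z‖ = 1) : (starRingEnd ℂ) z = z⁻¹ := by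
  have h1 : z * (starRingEnd ℂ) z = 1 := by
    rw [Complex.mul_conj]; norm_cast
    rw [Complex.normSq_eq_norm_sq, h]; norm_num
  have hz : z ≠ 0 := by rintro rfl; simp at h
  field_simp
  linear_combination h1

/-! ### Arithmetic helpers -/

lemma coprime_pow_prime_iff {p t m : ℕ} (hp : p.Prime) (ht : 0 < t) :
    Nat.Coprime m (p^t) ↔ ¬ p ∣ m := by
  rw [Nat.coprime_pow_right_iff ht, Nat.coprime_comm, hp.coprime_iff_not_dvd]

lemma sum_range_e_zero {r b : ℕ} (hr : 0 < r) (hb : ¬ r ∣ b) :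
    ∑ s ∈ Finset.range r, e (((s * b : ℕ) : ℝ) / (r : ℝ)) = 0 := by
  have h1 : ∀ s, e (((s * b : ℕ) : ℝ) / (r : ℝ)) = (e (1/(r:ℝ)) ^ b) ^ s := by
    intro s
    rw [e_nat_div, mul_comm s b, pow_mul]
  simp_rw [h1]
  refine geom_zero ?_ ?_
  · rw [← pow_mul, mul_comm b r, pow_mul, e_r_pow r hr, one_pow]
  · rw [Ne, e_pow_nat_eq_one_iff r hr]; exact hb

lemma b_not_dvd {r b : ℕ} (hr : 1 < r)
    (hb : b ∈ (Finset.Icc 1 r).filter (fun b => Nat.Coprime b r)) :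
    ¬ r ∣ b := by
  simp only [Finset.mem_filter, Finset.mem_Icc] at hb
  obtain ⟨⟨hb1, hb2⟩, hcop⟩ := hb
  intro hdvd
  have hbr : b = r := le_antisymm hb2 (Nat.le_of_dvd (by omega) hdvd)
  subst hbr
  have : b = 1 := by simpa using hcop
  omega

/-! ### Part (i), case `p ∣ q` -/

lemma inner1_zero_of_dvd {a q p t b : ℕ} (hp : p.Prime) (ht : 1 ≤ t)
    (ha : Nat.Coprime a q) (hpq : p ∣ q) (hb : ¬ (p^t) ∣ b) :
    ∑ s ∈ (Finset.range (p^t)).filter (fun s => Nat.Coprime (s * q + a) (p^t)),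
        e (((s * b : ℕ) : ℝ) / ((p^t : ℕ) : ℝ)) = 0 := by
  have hall : (Finset.range (p^t)).filter (fun s => Nat.Coprime (s * q + a) (p^t))
      = Finset.range (p^t) := by
    refine Finset.filter_true_of_mem (fun s _ => ?_)
    rw [coprime_pow_prime_iff hp ht]
    intro hdvd
    have hpa : p ∣ a := (Nat.dvd_add_right (Dvd.dvd.mul_left hpq s)).mp hdvd
    have h1 : p ∣ Nat.gcd a q := Nat.dvd_gcd hpa hpq
    rw [ha] at h1
    exact hp.one_lt.ne' (Nat.eq_one_of_dvd_one h1 ▸ rfl)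
  rw [hall]
  exact sum_range_e_zero (Nat.pow_pos hp.pos) hb

/-! ### Part (i), case `p ∤ q`, `t ≥ 2` -/

lemma inner1_zero_of_not_dvd {a q p t b : ℕ} (hp : p.Prime) (ht : 2 ≤ t)
    (hq : ¬ p ∣ q) (hbc : Nat.Coprime b (p^t)) :
    ∑ s ∈ (Finset.range (p^t)).filter (fun s => Nat.Coprime (s * q + a) (p^t)),
        e (((s * b : ℕ) : ℝ) / ((p^t : ℕ) : ℝ)) = 0 := by
  haveI := Fact.mk hp
  set r := p ^ t with hr
  have hrpos : 0 < r := Nat.pow_pos hp.pos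
  have hpb : ¬ p ∣ b := by
    intro hdvd
    have : p ∣ Nat.gcd b (p^t) := Nat.dvd_gcd hdvd (dvd_pow_self p (by omega))
    rw [hbc] at this; exact hp.one_lt.ne' (Nat.eq_one_of_dvd_one this ▸ rfl)
  have hrb : ¬ r ∣ b := fun h => hpb ((dvd_pow_self p (by omega : t ≠ 0)).trans h)
  have hqz : (q : ZMod p) ≠ 0 := by
    simpa [ZMod.natCast_eq_zero_iff] using hq
  set c : ZMod p := -(a : ZMod p) * (q : ZMod p)⁻¹ with hc
  set s0 := c.val with hs0def
  have hs0 : s0 < p := ZMod.val_lt c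
  have hcq : c * q = -(a : ZMod p) := by
    rw [hc, mul_assoc, inv_mul_cancel₀ hqz, mul_one]
  have key : ∀ s : ℕ, (¬ Nat.Coprime (s * q + a) (p^t)) ↔ ((s : ℕ) : ZMod p) = c := by
    intro s
    rw [coprime_pow_prime_iff hp (by omega), not_not,
      ← ZMod.natCast_eq_zero_iff]
    push_cast
    constructor
    · intro h
      have h2 : (s : ZMod p) * q = c * q := by rw [hcq]; linear_combination h
      exact mul_right_cancel₀ hqz h2
    · intro h; rw [h, hcq]; ring
  set f : ℕ → ℂ := fun s => e (((s * b : ℕ) : ℝ) / (r : ℝ)) with hf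
  have hsplit := Finset.sum_filter_add_sum_filter_not (Finset.range r)
    (fun s => Nat.Coprime (s * q + a) (p^t)) f
  have htot : ∑ s ∈ Finset.range r, f s = 0 := sum_range_e_zero hrpos hrb
  have hfc : (Finset.range r).filter (fun s => ¬ Nat.Coprime (s * q + a) (p^t))
      = (Finset.range r).filter (fun s => ((s : ℕ) : ZMod p) = c) := by
    apply Finset.filter_congr
    intro s _
    simpa using key s
  set u := t - 1 with hu
  have htu : t = u + 1 := by omega
  have hupos : 0 < u := by omega
  have hru : r = p ^ u * p := by rw [hr, htu, pow_succ]
  have himg : (Finset.range r).filter (fun s => ((s : ℕ) : ZMod p) = c)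
      = Finset.image (fun j => s0 + j * p) (Finset.range (p ^ u)) := by
    ext n
    simp only [Finset.mem_filter, Finset.mem_range, Finset.mem_image]
    constructor
    · rintro ⟨hn, hnc⟩
      refine ⟨n / p, ?_, ?_⟩
      · rw [Nat.div_lt_iff_lt_mul hp.pos, ← hru]; exact hn
      · have hmod : n % p = s0 := by
          have h1 : (n : ZMod p).val = c.val := by rw [hnc]
          rwa [ZMod.val_natCast] at h1
        rw [← hmod, Nat.mod_add_div']
    · rintro ⟨j, hj, rfl⟩
      constructor
      · calc s0 + j * p < p + j * p := by omega
          _ = (j + 1) * p := by ring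
          _ ≤ p ^ u * p := Nat.mul_le_mul_right p (by omega)
          _ = r := hru.symm
      · push_cast
        rw [ZMod.natCast_self, mul_zero, add_zero, hs0def, ZMod.natCast_val, ZMod.cast_id]
  have hinj : ∀ x ∈ Finset.range (p ^ u), ∀ y ∈ Finset.range (p ^ u),
      s0 + x * p = s0 + y * p → x = y := by
    intro x _ y _ h
    have := Nat.add_left_cancel h
    exact Nat.eq_of_mul_eq_mul_right hp.pos this
  have hcomp : ∑ s ∈ (Finset.range r).filter (fun s => ¬ Nat.Coprime (s * q + a) (p^t)), f s
      = 0 := by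
    rw [hfc, himg, Finset.sum_image hinj]
    have hterm : ∀ j : ℕ, f (s0 + j * p)
        = e (1/(r:ℝ)) ^ (s0 * b) * (e (1/(r:ℝ)) ^ (p * b)) ^ j := by
      intro j
      rw [hf]
      simp only
      rw [e_nat_div, ← pow_mul, ← pow_add]
      congr 1
      ring
    simp_rw [hterm, ← Finset.mul_sum]
    have hz1 : (e (1/(r:ℝ)) ^ (p * b)) ^ (p ^ u) = 1 := by
      rw [← pow_mul]
      have : p * b * p ^ u = r * b := by rw [hru]; ring
      rw [this, pow_mul, e_r_pow r hrpos, one_pow]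
    have hz2 : e (1/(r:ℝ)) ^ (p * b) ≠ 1 := by
      rw [Ne, e_pow_nat_eq_one_iff r hrpos]
      intro hdvd
      rw [hru, mul_comm (p^u) p] at hdvd
      have : p ^ u ∣ b := (mul_dvd_mul_iff_left hp.pos.ne').mp hdvd
      exact hpb ((dvd_pow_self p hupos.ne').trans this)
    rw [geom_zero hz1 hz2, mul_zero]
  have hfin := hsplit
  rw [hcomp, htot, add_zero] at hfin
  exact hfin

/-! ### Part (ii) helpers -/

lemma filter_not_coprime_eq {a q p : ℕ} (hp : p.Prime) (hq : ¬ p ∣ q) :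
    (Finset.range p).filter (fun s => ¬ Nat.Coprime (s * q + a) p)
      = {((-(a : ZMod p)) * (q : ZMod p)⁻¹).val} := by
  haveI := Fact.mk hp
  have hqz : (q : ZMod p) ≠ 0 := by
    simpa [ZMod.natCast_eq_zero_iff] using hq
  set c : ZMod p := -(a : ZMod p) * (q : ZMod p)⁻¹ with hc
  have hcq : c * q = -(a : ZMod p) := by
    rw [hc, mul_assoc, inv_mul_cancel₀ hqz, mul_one]
  ext n
  simp only [Finset.mem_filter, Finset.mem_range, Finset.mem_singleton]
  constructor
  · rintro ⟨hn, hnc⟩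
    rw [Nat.coprime_comm, hp.coprime_iff_not_dvd, not_not,
      ← ZMod.natCast_eq_zero_iff] at hnc
    push_cast at hnc
    have h2 : (n : ZMod p) * q = c * q := by rw [hcq]; linear_combination hnc
    have h3 : (n : ZMod p) = c := mul_right_cancel₀ hqz h2
    rw [← h3, ZMod.val_natCast, Nat.mod_eq_of_lt hn]
  · rintro rfl
    refine ⟨ZMod.val_lt c, ?_⟩
    rw [Nat.coprime_comm, hp.coprime_iff_not_dvd, not_not,
      ← ZMod.natCast_eq_zero_iff]
    push_cast
    rw [ZMod.natCast_val, ZMod.cast_id, hcq]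
    ring

lemma sum1_eq {a q p b : ℕ} (hp : p.Prime) (hq : ¬ p ∣ q) (hb : ¬ p ∣ b) :
    ∑ s ∈ (Finset.range p).filter (fun s => Nat.Coprime (s * q + a) p),
        e (((s * b : ℕ) : ℝ) / (p : ℝ))
      = - e ((((((-(a : ZMod p)) * (q : ZMod p)⁻¹).val * b : ℕ)) : ℝ) / (p : ℝ)) := by
  haveI := Fact.mk hp
  set f : ℕ → ℂ := fun s => e (((s * b : ℕ) : ℝ) / (p : ℝ)) with hf
  have hsplit := Finset.sum_filter_add_sum_filter_not (Finset.range p)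
    (fun s => Nat.Coprime (s * q + a) p) f
  have htot : ∑ s ∈ Finset.range p, f s = 0 := by
    have h1 : ∀ s, f s = (e (1/(p:ℝ)) ^ b) ^ s := by
      intro s; rw [hf]; simp only; rw [e_nat_div, mul_comm s b, pow_mul]
    simp_rw [h1]
    refine geom_zero ?_ ?_
    · rw [← pow_mul, mul_comm b p, pow_mul, e_r_pow p hp.pos, one_pow]
    · rw [Ne, ← zpow_natCast, e_pow_int_eq_one_iff p hp.pos]
      exact_mod_cast hb
  rw [filter_not_coprime_eq hp hq, Finset.sum_singleton, htot] at hsplit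
  linear_combination hsplit

lemma count_roots_le {p k : ℕ} (hp : p.Prime) (hk : 1 ≤ k) (c : ZMod p) :
    ((Finset.range p).filter (fun s => ((s : ℕ) : ZMod p) ^ k = c)).card ≤ k := by
  haveI := Fact.mk hp
  classical
  have hinj : Set.InjOn (fun s : ℕ => ((s : ℕ) : ZMod p))
      ((Finset.range p).filter (fun s => ((s : ℕ) : ZMod p) ^ k = c)) := by
    intro x hx y hy hxy
    simp only [Finset.coe_filter, Set.mem_setOf_eq, Finset.mem_range] at hx hy
    have := congrArg ZMod.val hxy
    simpa [ZMod.val_natCast, Nat.mod_eq_of_lt hx.1, Nat.mod_eq_of_lt hy.1] using this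
  have hmaps : ∀ s ∈ (Finset.range p).filter (fun s => ((s : ℕ) : ZMod p) ^ k = c),
      ((s : ℕ) : ZMod p) ∈ (Polynomial.nthRoots k c).toFinset := by
    intro s hs
    simp only [Finset.mem_filter] at hs
    rw [Multiset.mem_toFinset, Polynomial.mem_nthRoots (by omega : 0 < k)]
    exact hs.2
  calc ((Finset.range p).filter (fun s => ((s : ℕ) : ZMod p) ^ k = c)).card
      ≤ (Polynomial.nthRoots k c).toFinset.card :=
        Finset.card_le_card_of_injOn _ hmaps hinj
    _ ≤ Multiset.card (Polynomial.nthRoots k c) := Multiset.toFinset_card_le _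
    _ ≤ k := Polynomial.card_nthRoots k c

lemma parseval_bound {p k : ℕ} (hp : p.Prime) (hk : 1 ≤ k) :
    ∑ b ∈ Finset.range p,
        ‖∑ s ∈ Finset.range p, e (((s ^ k * b : ℕ) : ℝ) / (p : ℝ))‖ ^ 2
      ≤ (k : ℝ) * (p : ℝ) ^ 2 := by
  haveI := Fact.mk hp
  set ζ : ℂ := e (1/(p:ℝ)) with hζ
  have hζ0 : ζ ≠ 0 := e_ne_zero _
  have hnormζ : ∀ m : ℕ, ‖ζ ^ m‖ = 1 := by
    intro m; rw [norm_pow, norm_e, one_pow]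
  set T : ℕ → ℂ := fun b => ∑ s ∈ Finset.range p, e (((s ^ k * b : ℕ) : ℝ) / (p : ℝ)) with hT
  have hTz : ∀ b, T b = ∑ s ∈ Finset.range p, ζ ^ ((s ^ k * b : ℕ) : ℤ) := by
    intro b
    refine Finset.sum_congr rfl (fun s _ => ?_)
    rw [e_nat_div, zpow_natCast]
  have hconjT : ∀ b, (starRingEnd ℂ) (T b)
      = ∑ s ∈ Finset.range p, ζ ^ (-((s ^ k * b : ℕ) : ℤ)) := by
    intro b
    rw [hT]
    simp only
    rw [map_sum]
    refine Finset.sum_congr rfl (fun s _ => ?_)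
    rw [e_nat_div, conj_unit (hnormζ _), ← zpow_natCast, ← zpow_neg]
  have hmulconj : ∀ b : ℕ, T b * (starRingEnd ℂ) (T b)
      = ∑ s ∈ Finset.range p, ∑ s' ∈ Finset.range p,
          ζ ^ ((b : ℤ) * ((s : ℤ) ^ k - (s' : ℤ) ^ k)) := by
    intro b
    rw [hconjT b, hTz b, Finset.sum_mul_sum]
    refine Finset.sum_congr rfl (fun s _ => Finset.sum_congr rfl (fun s' _ => ?_))
    rw [← zpow_add₀ hζ0]
    congr 1
    push_cast
    ring
  have hζd : ∀ d : ℤ, ∑ b ∈ Finset.range p, ζ ^ ((b : ℤ) * d)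
      = if (p : ℤ) ∣ d then (p : ℂ) else 0 := by
    intro d
    have hrw : ∀ b : ℕ, ζ ^ ((b : ℤ) * d) = (ζ ^ d) ^ b := by
      intro b
      rw [← zpow_natCast (ζ ^ d) b, ← zpow_mul, mul_comm]
    simp_rw [hrw]
    by_cases hdvd : (p : ℤ) ∣ d
    · have h1 : ζ ^ d = 1 := (e_pow_int_eq_one_iff p hp.pos d).mpr hdvd
      simp [h1, hdvd]
    · have h1 : ζ ^ d ≠ 1 := fun h => hdvd ((e_pow_int_eq_one_iff p hp.pos d).mp h)
      have h2 : (ζ ^ d) ^ p = 1 := by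
        rw [← zpow_natCast, ← zpow_mul, mul_comm, zpow_mul, zpow_natCast,
          e_r_pow p hp.pos, one_zpow]
      rw [if_neg hdvd]
      rw [geom_sum_eq h1, h2, sub_self, zero_div]
  have key : ∑ b ∈ Finset.range p, T b * (starRingEnd ℂ) (T b)
      = ∑ s ∈ Finset.range p, ∑ s' ∈ Finset.range p,
          (if (p : ℤ) ∣ ((s : ℤ) ^ k - (s' : ℤ) ^ k) then (p : ℂ) else 0) := by
    simp_rw [hmulconj]
    rw [Finset.sum_comm]
    refine Finset.sum_congr rfl (fun s _ => ?_)
    rw [Finset.sum_comm]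
    refine Finset.sum_congr rfl (fun s' _ => ?_)
    exact hζd _
  have hre : ∑ b ∈ Finset.range p, ‖T b‖ ^ 2
      = ∑ s ∈ Finset.range p, ∑ s' ∈ Finset.range p,
          (if (p : ℤ) ∣ ((s : ℤ) ^ k - (s' : ℤ) ^ k) then (p : ℝ) else 0) := by
    have h1 : ∀ b, ‖T b‖ ^ 2 = (T b * (starRingEnd ℂ) (T b)).re := by
      intro b
      rw [Complex.mul_conj]
      rw [Complex.ofReal_re, Complex.normSq_eq_norm_sq]
    simp_rw [h1, ← Complex.re_sum, key, Complex.re_sum]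
    refine Finset.sum_congr rfl (fun s _ => ?_)
    refine Finset.sum_congr rfl (fun s' _ => ?_)
    split <;> simp
  rw [hre]
  have hcond : ∀ s s' : ℕ, ((p : ℤ) ∣ ((s : ℤ) ^ k - (s' : ℤ) ^ k))
      ↔ ((s : ℕ) : ZMod p) ^ k = ((s' : ℕ) : ZMod p) ^ k := by
    intro s s'
    rw [← ZMod.intCast_zmod_eq_zero_iff_dvd]
    push_cast
    rw [sub_eq_zero]
  have hbound : ∀ s' ∈ Finset.range p,
      ∑ s ∈ Finset.range p, (if (p : ℤ) ∣ ((s : ℤ) ^ k - (s' : ℤ) ^ k) then (p : ℝ) else 0)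
        ≤ (k : ℝ) * (p : ℝ) := by
    intro s' _
    have hcardsum : ∑ s ∈ Finset.range p,
        (if (p : ℤ) ∣ ((s : ℤ) ^ k - (s' : ℤ) ^ k) then (p : ℝ) else 0)
        = (((Finset.range p).filter
            (fun s => ((s : ℕ) : ZMod p) ^ k = ((s' : ℕ) : ZMod p) ^ k)).card : ℝ) * p := by
      have hfe : Finset.filter (fun s : ℕ => (p : ℤ) ∣ ((s : ℤ) ^ k - (s' : ℤ) ^ k))
            (Finset.range p)
          = Finset.filter (fun s : ℕ => ((s : ℕ) : ZMod p) ^ k = ((s' : ℕ) : ZMod p) ^ k)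
            (Finset.range p) := by
        apply Finset.filter_congr
        intro s _
        simpa using hcond s s'
      rw [Finset.sum_ite, Finset.sum_const, Finset.sum_const_zero, add_zero, nsmul_eq_mul, hfe]
    rw [hcardsum]
    have hcard := count_roots_le hp hk (((s' : ℕ) : ZMod p) ^ k)
    have hcard' : (((Finset.range p).filter
        (fun s => ((s : ℕ) : ZMod p) ^ k = ((s' : ℕ) : ZMod p) ^ k)).card : ℝ) ≤ (k : ℝ) := by
      exact_mod_cast hcard
    exact mul_le_mul_of_nonneg_right hcard' (by positivity)
  rw [Finset.sum_comm]
  calc ∑ s' ∈ Finset.range p, ∑ s ∈ Finset.range p,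
          (if (p : ℤ) ∣ ((s : ℤ) ^ k - (s' : ℤ) ^ k) then (p : ℝ) else 0)
      ≤ ∑ _s' ∈ Finset.range p, (k : ℝ) * (p : ℝ) := Finset.sum_le_sum hbound
    _ = (p : ℝ) * ((k : ℝ) * (p : ℝ)) := by rw [Finset.sum_const, Finset.card_range, nsmul_eq_mul]
    _ = (k : ℝ) * (p : ℝ) ^ 2 := by ring

lemma cs_bound {p : ℕ} (f : ℕ → ℝ) (hf : ∀ b, 0 ≤ f b) (M : ℝ)
    (hM : ∑ b ∈ Finset.range p, f b ^ 2 ≤ M) :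
    ∑ b ∈ Finset.range p, f b ≤ Real.sqrt ((p : ℝ) * M) := by
  have h0 : 0 ≤ ∑ b ∈ Finset.range p, f b := Finset.sum_nonneg (fun b _ => hf b)
  have hsq : (∑ b ∈ Finset.range p, f b) ^ 2 ≤ (p : ℝ) * M := by
    have := Finset.sum_mul_sq_le_sq_mul_sq (Finset.range p) (fun _ => (1:ℝ)) f
    simp only [one_mul, one_pow] at this
    calc (∑ b ∈ Finset.range p, f b) ^ 2
        ≤ (∑ _b ∈ Finset.range p, (1:ℝ)) * ∑ b ∈ Finset.range p, f b ^ 2 := this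
      _ = (p : ℝ) * ∑ b ∈ Finset.range p, f b ^ 2 := by
          rw [Finset.sum_const, Finset.card_range, nsmul_eq_mul, mul_one]
      _ ≤ (p : ℝ) * M := by
          apply mul_le_mul_of_nonneg_left hM (by positivity)
  calc ∑ b ∈ Finset.range p, f b = Real.sqrt ((∑ b ∈ Finset.range p, f b)^2) :=
        (Real.sqrt_sq h0).symm
    _ ≤ Real.sqrt ((p:ℝ) * M) := Real.sqrt_le_sqrt hsq

lemma numeric_bound {p k : ℕ} (hp : 2 ≤ p) (hk : 1 ≤ k) (ε : ℝ) (hε : 0 < ε) :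
    (1/((p:ℝ)-1))^3 * (Real.sqrt ((p:ℝ) * ((k:ℝ) * (p:ℝ)^2)) + p)
      ≤ (8*Real.sqrt k + 8) * (p:ℝ) ^ (-(3:ℝ)/2 + ε) := by
  set P : ℝ := (p : ℝ) with hP
  have hP2 : (2:ℝ) ≤ P := by rw [hP]; exact_mod_cast hp
  have hP0 : (0:ℝ) < P := by linarith
  set S := Real.sqrt P with hS
  have hS2 : S^2 = P := Real.sq_sqrt hP0.le
  have hS1 : 1 ≤ S := by
    rw [hS, show (1:ℝ) = Real.sqrt 1 by simp]
    exact Real.sqrt_le_sqrt (by linarith)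
  have hS0 : 0 < S := by linarith
  set K := Real.sqrt k with hK
  have hK1 : 1 ≤ K := by
    rw [hK, show (1:ℝ) = Real.sqrt 1 by simp]
    exact Real.sqrt_le_sqrt (by exact_mod_cast hk)
  have hsqrt : Real.sqrt (P * ((k:ℝ) * P^2)) = K * (P * S) := by
    have h1 : P * ((k:ℝ) * P^2) = (k:ℝ) * (P*S)^2 := by
      rw [mul_pow, hS2]; ring
    rw [h1, Real.sqrt_mul (by positivity), Real.sqrt_sq (by positivity), hK]
  rw [hsqrt]
  have hstep1 : (1/(P-1))^3 * (K * (P * S) + P) ≤ (2/P)^3 * ((K+1) * (P * S)) := by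
    apply mul_le_mul
    · apply pow_le_pow_left₀ (one_div_nonneg.mpr (by linarith)) _ 3
      rw [div_le_div_iff₀ (by linarith) hP0]
      linarith
    · have : P ≤ P * S := by nlinarith
      nlinarith
    · positivity
    · positivity
  have hstep2 : (2/P)^3 * ((K+1) * (P * S)) = (8*K + 8) / (P * S) := by
    field_simp
    linear_combination 8 * hS2
  have hrpow1 : P ^ (-(3:ℝ)/2) = (8*K+8)⁻¹ * ((8*K + 8) / (P * S)) := by
    have h32 : P ^ ((3:ℝ)/2) = P * S := by
      rw [show (3:ℝ)/2 = 1 + 1/2 by norm_num, Real.rpow_add hP0, Real.rpow_one,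
        ← Real.sqrt_eq_rpow]
    have hneg : P ^ (-(3:ℝ)/2) = (P ^ ((3:ℝ)/2))⁻¹ := by
      rw [← Real.rpow_neg hP0.le]; norm_num
    rw [hneg, h32]
    field_simp
  have hrpow2 : P ^ (-(3:ℝ)/2) ≤ P ^ (-(3:ℝ)/2 + ε) :=
    Real.rpow_le_rpow_of_exponent_le (by linarith) (by linarith)
  calc (1/(P-1))^3 * (K * (P * S) + P)
      ≤ (2/P)^3 * ((K+1) * (P * S)) := hstep1
    _ = (8*K + 8) / (P * S) := hstep2
    _ = (8*K+8) * P ^ (-(3:ℝ)/2) := by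
        rw [hrpow1]; field_simp
    _ ≤ (8*K+8) * P ^ (-(3:ℝ)/2 + ε) := by
        apply mul_le_mul_of_nonneg_left hrpow2 (by positivity)

/-! ### Main theorem -/

theorem statement18 (k : ℕ) (hk : 1 ≤ k) (ε : ℝ) (hε : 0 < ε) :
    ∃ C : ℝ, 0 < C ∧
      ∀ a q : ℕ, 0 < a → 0 < q → Nat.Coprime a q →
        (∀ p : ℕ, p.Prime → ∀ t : ℕ, 1 ≤ t →
          (p ∣ q → Aloc k a q (p ^ t) = 0) ∧
          (¬ p ∣ q → 2 ≤ t → Aloc k a q (p ^ t) = 0)) ∧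
        (∀ p : ℕ, p.Prime → ¬ p ∣ q →
          ‖Aloc k a q p‖ ≤ C * (p : ℝ) ^ (-(3 : ℝ) / 2 + ε)) := by
  refine ⟨8 * Real.sqrt k + 8, by positivity, ?_⟩
  intro a q ha0 hq0 haq
  constructor
  · -- part (i)
    intro p hp t ht
    have hr1 : 1 < p ^ t := by
      calc 1 < p := hp.one_lt
        _ = p ^ 1 := (pow_one p).symm
        _ ≤ p ^ t := Nat.pow_le_pow_right hp.pos ht
    constructor
    · intro hpq
      rw [Aloc]
      rw [Finset.sum_eq_zero, mul_zero]
      intro b hb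
      have hb' : ¬ (p^t) ∣ b := b_not_dvd hr1 hb
      rw [inner1_zero_of_dvd hp ht haq hpq hb']
      rw [zero_pow (by norm_num), zero_mul]
    · intro hpq ht2
      rw [Aloc]
      rw [Finset.sum_eq_zero, mul_zero]
      intro b hb
      simp only [Finset.mem_filter, Finset.mem_Icc] at hb
      have hbc : Nat.Coprime b (p^t) := hb.2
      rw [inner1_zero_of_not_dvd hp ht2 hpq hbc]
      rw [zero_pow (by norm_num), zero_mul]
  · -- part (ii)
    intro p hp hpq
    haveI := Fact.mk hp
    have hp2 : 2 ≤ p := hp.two_le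
    have hqp : Nat.Coprime q p := ((hp.coprime_iff_not_dvd).mpr hpq).symm
    -- the scalar
    have hsc : ((Nat.totient q : ℝ) / (Nat.totient (q * p) : ℝ)) ^ 3
        = (1/((p:ℝ)-1))^3 := by
      rw [Nat.totient_mul hqp, Nat.totient_prime hp]
      have hq' : (0:ℝ) < (Nat.totient q : ℝ) := by
        exact_mod_cast (Nat.totient_pos).mpr hq0
      rw [Nat.cast_mul]
      rw [Nat.cast_sub hp.one_le]
      push_cast
      rw [div_mul_eq_div_div, div_self hq'.ne']
    set T : ℕ → ℂ := fun b => ∑ s ∈ Finset.range p, e (((s ^ k * b : ℕ) : ℝ) / (p : ℝ))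
      with hT
    set B := (Finset.Icc 1 p).filter (fun b => Nat.Coprime b p) with hB
    have hBsub : B ⊆ Finset.range p := by
      intro b hb
      simp only [hB, Finset.mem_filter, Finset.mem_Icc] at hb
      rw [Finset.mem_range]
      rcases Nat.lt_or_ge b p with h | h
      · exact h
      · exfalso
        have : b = p := le_antisymm hb.1.2 h
        subst this
        have : b = 1 := by simpa using hb.2
        omega
    -- bound each term
    have hterm : ∀ b ∈ B,
        ‖(∑ s ∈ (Finset.range p).filter (fun s => Nat.Coprime (s * q + a) p),
            e (((s * b : ℕ) : ℝ) / (p : ℝ))) ^ 2 *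
          (∑ s ∈ (Finset.range p).filter (fun s => Nat.Coprime (s * q + 1) p),
            e (((s ^ k * b : ℕ) : ℝ) / (p : ℝ)))‖ ≤ ‖T b‖ + 1 := by
      intro b hb
      simp only [hB, Finset.mem_filter, Finset.mem_Icc] at hb
      have hpb : ¬ p ∣ b := by
        intro hdvd
        have : p ∣ Nat.gcd b p := Nat.dvd_gcd hdvd dvd_rfl
        rw [hb.2] at this
        exact hp.one_lt.ne' (Nat.eq_one_of_dvd_one this ▸ rfl)
      rw [norm_mul, norm_pow, sum1_eq hp hpq hpb, norm_neg, norm_e, one_pow, one_mul]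
      -- second sum: split off the singleton
      set s1 := ((-((1:ℕ) : ZMod p)) * (q : ZMod p)⁻¹).val with hs1
      have hsplit := Finset.sum_filter_add_sum_filter_not (Finset.range p)
        (fun s => Nat.Coprime (s * q + 1) p)
        (fun s => e (((s ^ k * b : ℕ) : ℝ) / (p : ℝ)))
      rw [filter_not_coprime_eq hp hpq, Finset.sum_singleton] at hsplit
      have h2 : ∑ s ∈ (Finset.range p).filter (fun s => Nat.Coprime (s * q + 1) p),
          e (((s ^ k * b : ℕ) : ℝ) / (p : ℝ))
          = T b - e (((s1 ^ k * b : ℕ) : ℝ) / (p : ℝ)) := by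
        rw [hT]; simp only
        rw [← hsplit]
        ring
      rw [h2]
      calc ‖T b - e (((s1 ^ k * b : ℕ) : ℝ) / (p : ℝ))‖
          ≤ ‖T b‖ + ‖e (((s1 ^ k * b : ℕ) : ℝ) / (p : ℝ))‖ := norm_sub_le _ _
        _ = ‖T b‖ + 1 := by rw [norm_e]
    -- assemble
    rw [Aloc, hsc]
    rw [norm_mul]
    have h1p : (1:ℝ) < (p:ℝ) := by exact_mod_cast hp.one_lt
    have hsc0 : (0:ℝ) ≤ (1/((p:ℝ)-1))^3 :=
      pow_nonneg (one_div_nonneg.mpr (by linarith)) 3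
    rw [Complex.norm_real, Real.norm_eq_abs, abs_of_nonneg hsc0]
    have hsum : ‖∑ b ∈ B,
        (∑ s ∈ (Finset.range p).filter (fun s => Nat.Coprime (s * q + a) p),
            e (((s * b : ℕ) : ℝ) / (p : ℝ))) ^ 2 *
          (∑ s ∈ (Finset.range p).filter (fun s => Nat.Coprime (s * q + 1) p),
            e (((s ^ k * b : ℕ) : ℝ) / (p : ℝ)))‖
        ≤ Real.sqrt ((p:ℝ) * ((k:ℝ) * (p:ℝ)^2)) + p := by
      calc ‖∑ b ∈ B, _‖ ≤ ∑ b ∈ B, (‖T b‖ + 1) :=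
            (norm_sum_le _ _).trans (Finset.sum_le_sum hterm)
        _ = (∑ b ∈ B, ‖T b‖) + B.card := by
            rw [Finset.sum_add_distrib, Finset.sum_const, nsmul_eq_mul, mul_one]
        _ ≤ (∑ b ∈ Finset.range p, ‖T b‖) + p := by
            apply add_le_add
            · apply Finset.sum_le_sum_of_subset_of_nonneg hBsub
              intro b _ _; positivity
            · have := Finset.card_le_card hBsub
              rw [Finset.card_range] at this
              exact_mod_cast this
        _ ≤ Real.sqrt ((p:ℝ) * ((k:ℝ) * (p:ℝ)^2)) + p := by
            apply add_le_add_left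
            apply cs_bound (fun b => ‖T b‖) (fun b => norm_nonneg _)
            exact parseval_bound hp hk
    exact le_trans (mul_le_mul_of_nonneg_left hsum hsc0) (numeric_bound hp2 hk ε hε)
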